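/- Let F be a field of characteristic p > 0 and let A₁,...,A_n ⊆ F each be a coset of a finite additive subgroup, with each |A_i| > 1. Suppose f ∈ F[X₁,...,X_n] contains a monomial X₁^{k₁}···X_n^{k_n} with nonzero coefficient, where k_i < |A_i| for all i and deg(f) ≤ k₁+...+k_n + (1−p^{-1})·min{|A₁|,...,|A_n|} − 1. Then there exists a ∈ A₁×···×A_n with f(a) ≠ 0. -/

import Mathlib

open Polynomial

lemma lucas_nondvd {p : ℕ} [Fact p.Prime] {e d : ℕ} (h1 : p ^ e < d) (h2 : d < p ^ (e + 1)) :
    ¬ p ∣ d.choose (p ^ e) := by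
  have hp2 : 2 ≤ p := (Fact.out : p.Prime).two_le
  have hmod : d.choose (p ^ e) ≡
      ∏ i ∈ Finset.range (e + 1), Nat.choose (d / p ^ i % p) (p ^ e / p ^ i % p) [MOD p] :=
    Choose.choose_modEq_prod_range_choose_nat h2 ((pow_lt_pow_right₀ (by omega) (by omega)))
  have hc1 : 1 ≤ d / p ^ e := Nat.one_le_div_iff (Nat.pow_pos (by omega)) |>.mpr h1.le
  have hc2 : d / p ^ e < p := Nat.div_lt_iff_lt_mul (Nat.pow_pos (by omega)) |>.mpr
    (by rw [mul_comm, ← pow_succ]; exact h2)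
  have hprod : ∏ i ∈ Finset.range (e + 1), Nat.choose (d / p ^ i % p) (p ^ e / p ^ i % p)
      = d / p ^ e := by
    rw [Finset.prod_range_succ]
    have h1' : ∀ i ∈ Finset.range e, Nat.choose (d / p ^ i % p) (p ^ e / p ^ i % p) = 1 := by
      intro i hi
      rw [Finset.mem_range] at hi
      have hdvd : p ∣ p ^ e / p ^ i := by
        rw [Nat.pow_div (by omega) (by omega)]
        exact dvd_pow_self p (by omega)
      rw [Nat.mod_eq_zero_of_dvd hdvd]
      exact Nat.choose_zero_right _
    rw [Finset.prod_congr rfl h1', Finset.prod_const_one, one_mul,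
      Nat.div_self (Nat.pow_pos (by omega)), Nat.one_mod_eq_one.mpr (by omega),
      Nat.mod_eq_of_lt hc2, Nat.choose_one_right]
  rw [hprod] at hmod
  intro hdvd
  have : d / p ^ e % p = 0 := by
    have := hmod.symm
    rw [Nat.ModEq] at this
    rw [Nat.mod_eq_of_lt hc2] at this
    omega
  rw [Nat.mod_eq_of_lt hc2] at this
  omega

lemma one_var {F : Type*} [Field F] (p : ℕ) [Fact p.Prime] [CharP F p]
    (A : Finset F) (hA : ∃ (H : AddSubgroup F) (t : F),
      (A : Set F) = (fun x => t + x) '' (H : Set F))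
    (hcard : 1 < A.card) :
    ∃ (e : ℕ) (r : Polynomial F), A.card = p ^ e ∧ 1 ≤ e ∧ r.natDegree ≤ A.card / p ∧
      ∀ a ∈ A, r.eval a = a ^ A.card := by
  have hp2 : 2 ≤ p := (Fact.out : p.Prime).two_le
  classical
  obtain ⟨H, t, hAt⟩ := hA
  -- H is finite
  have hHfin : (H : Set F).Finite := by
    apply Set.Finite.of_finite_image (f := fun x => t + x)
    · rw [← hAt]; exact (A : Set F).toFinite
    · exact (add_right_injective t).injOn
  set B : Finset F := hHfin.toFinset with hB
  have hBmem : ∀ x : F, x ∈ B ↔ x ∈ H := fun x => Set.Finite.mem_toFinset _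
  have hAB : A = B.image (fun x => t + x) := by
    apply Finset.coe_injective
    rw [hAt, Finset.coe_image, Set.Finite.coe_toFinset]
  have hcardAB : A.card = B.card := by
    rw [hAB, Finset.card_image_of_injective _ (add_right_injective t)]
  -- card is a power of p
  haveI : Finite (H : Set F) := hHfin.to_subtype
  haveI : Finite H := ‹Finite (H : Set F)›
  haveI : Fintype H := Fintype.ofFinite _
  have hpgroup : IsPGroup p (Multiplicative H) := by
    intro g
    refine ⟨1, ?_⟩
    rw [pow_one]
    have : (p : F) * ((Multiplicative.toAdd g : H) : F) = 0 := by
      rw [CharP.cast_eq_zero F p, zero_mul]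
    have h2 : p • (Multiplicative.toAdd g) = 0 := by
      apply Subtype.ext
      push_cast
      rw [nsmul_eq_mul]
      exact this
    rw [← ofAdd_toAdd g, ← ofAdd_nsmul, h2, ofAdd_zero]
  obtain ⟨e, he⟩ := (IsPGroup.iff_card (G := Multiplicative H)).mp hpgroup
  have hcardB : B.card = p ^ e := by
    rw [hB, Set.Finite.card_toFinset, ← he, Nat.card_eq_fintype_card,
      Fintype.card_multiplicative]
    exact Fintype.card_congr (Equiv.refl _)
  have he1 : 1 ≤ e := by
    by_contra h
    push_neg at h
    interval_cases e
    rw [hcardAB, hcardB, pow_zero] at hcard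
    omega
  -- closure properties of B
  have hB0 : (0 : F) ∈ B := (hBmem 0).mpr H.zero_mem
  have hBsub : ∀ x ∈ B, ∀ y ∈ B, x - y ∈ B := fun x hx y hy =>
    (hBmem _).mpr (H.sub_mem ((hBmem x).mp hx) ((hBmem y).mp hy))
  have hBadd : ∀ x ∈ B, ∀ y ∈ B, x + y ∈ B := fun x hx y hy =>
    (hBmem _).mpr (H.add_mem ((hBmem x).mp hx) ((hBmem y).mp hy))
  set q := A.card with hq
  have hqB : B.card = q := hcardAB.symm
  -- the subgroup polynomial
  set P : Polynomial F := ∏ b ∈ B, (X - C b) with hP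
  have hPmonic : P.Monic := monic_prod_of_monic _ _ (fun b _ => monic_X_sub_C b)
  have hPdeg : P.natDegree = q := by
    rw [hP, natDegree_prod _ _ (fun b _ => X_sub_C_ne_zero b)]
    simp [hqB]
  have hProot : ∀ b ∈ B, P.eval b = 0 := by
    intro b hb
    rw [hP, eval_prod]
    exact Finset.prod_eq_zero hb (by simp)
  have hshift : ∀ b ∈ B, P.comp (X + C b) = P := by
    intro b hb
    rw [hP, prod_comp]
    have : ∀ b' ∈ B, (X - C b').comp (X + C b) = X - C (b' - b) := by
      intro b' _
      rw [sub_comp, X_comp, C_comp, C_sub]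
      ring
    rw [Finset.prod_congr rfl this]
    refine Finset.prod_nbij' (fun b' => b' - b) (fun b'' => b'' + b) ?_ ?_ ?_ ?_ ?_
    · intro x hx; exact hBsub x hx b hb
    · intro x hx; exact hBadd x hx b hb
    · intro x _; ring
    · intro x _; ring
    · intro x _; ring_nf
  have hq2 : 2 ≤ q := hcard
  have hqpe : q = p ^ e := hcardAB.trans hcardB
  -- the additivity identity, bivariate version
  set Θ : Polynomial (Polynomial F) := P.map (C : F →+* Polynomial F) with hΘ
  set Φ : Polynomial (Polynomial F) := Θ.comp (X + C (X : Polynomial F)) with hΦ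
  have hΘmonic : Θ.Monic := hPmonic.map _
  have hΘdeg : Θ.natDegree = q := by
    rw [hΘ, natDegree_map_eq_of_injective C_injective, hPdeg]
  have hΦmonic : Φ.Monic := hΘmonic.comp_X_add_C _
  have hΦdeg : Φ.natDegree = q := by
    rw [hΦ, natDegree_comp, natDegree_X_add_C, mul_one, hΘdeg]
  have hEV : ∀ c : F, (Polynomial.eval (C c) Φ = P.comp (X + C c)) ∧
      (Polynomial.eval (C c) Θ = C (P.eval c)) := by
    intro c
    constructor
    · rw [hΦ, eval_comp, eval_add, eval_X, eval_C, hΘ, eval_map, add_comm]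
      rfl
    · rw [hΘ, eval_map, eval₂_at_apply]
  have key : Φ = Θ + Polynomial.C P := by
    set Δ : Polynomial (Polynomial F) := Φ - Θ - Polynomial.C P with hΔ
    have hΔx : Φ = Θ + Polynomial.C P ↔ Δ = 0 := by
      rw [hΔ, sub_sub, sub_eq_zero]
    rw [hΔx]
    by_cases h0 : Δ = 0
    · exact h0
    have hroots : ∀ b : F, b ∈ B → Δ.eval (C b) = 0 := by
      intro b hb
      rw [hΔ, eval_sub, eval_sub, (hEV b).1, (hEV b).2, hshift b hb,
        hProot b hb, Polynomial.eval_C, map_zero]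
      ring
    have hdeglt : Δ.natDegree < q := by
      rw [Polynomial.natDegree_lt_iff_degree_lt h0]
      have h1 : (Φ - Θ).degree < (q : WithBot ℕ) := by
        have hdegeq : Φ.degree = Θ.degree := by
          rw [degree_eq_natDegree hΦmonic.ne_zero, degree_eq_natDegree hΘmonic.ne_zero,
            hΦdeg, hΘdeg]
        have hlc : Φ.leadingCoeff = Θ.leadingCoeff := by
          rw [hΦmonic.leadingCoeff, hΘmonic.leadingCoeff]
        have := Polynomial.degree_sub_lt hdegeq hΦmonic.ne_zero hlc
        rwa [degree_eq_natDegree hΦmonic.ne_zero, hΦdeg] at this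
      have h2 : (Polynomial.C P).degree < (q : WithBot ℕ) := by
        refine lt_of_le_of_lt degree_C_le ?_
        exact_mod_cast WithBot.coe_lt_coe.mpr (by omega)
      calc Δ.degree ≤ max (Φ - Θ).degree (Polynomial.C P).degree := degree_sub_le _ _
        _ < (q : WithBot ℕ) := max_lt h1 h2
    apply Polynomial.eq_zero_of_natDegree_lt_card_of_eval_eq_zero Δ
      (f := fun b : B => (C (b : F) : Polynomial F))
      (fun x y hxy => Subtype.ext (C_injective hxy))
      (fun b => hroots b b.2)
    rw [Fintype.card_coe, hqB]
    exact hdeglt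
  have hadd : ∀ c : F, P.comp (X + C c) = P + C (P.eval c) := by
    intro c
    have := congrArg (Polynomial.eval (C c)) key
    rw [eval_add, (hEV c).1, (hEV c).2, Polynomial.eval_C,
      add_comm (C (P.eval c)) P] at this
    exact this
  -- coefficient extraction
  have hcoeffzero : ∀ d, p ^ (e - 1) < d → d < q → P.coeff d = 0 := by
    intro d hd1 hd2
    by_cases hdsupp : d ∈ P.support
    swap
    · exact Polynomial.notMem_support_iff.mp hdsupp
    set j := p ^ (e - 1) with hj
    have hj0 : 0 < j := Nat.pow_pos (by omega)
    have h1 := congrArg (fun ψ : Polynomial (Polynomial F) =>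
      (ψ.coeff j).coeff (d - j)) key
    simp only [coeff_add] at h1
    have hr1 : (Θ.coeff j).coeff (d - j) = 0 := by
      rw [hΘ, Polynomial.coeff_map, Polynomial.coeff_C, if_neg (by omega)]
    have hr2 : (((Polynomial.C P).coeff j)).coeff (d - j) = 0 := by
      rw [Polynomial.coeff_C, if_neg (by omega), Polynomial.coeff_zero]
    rw [hr1, hr2, add_zero] at h1
    -- expand LHS
    have hΦsum : Φ.coeff j = ∑ i ∈ Θ.support,
        C (P.coeff i) * (X ^ (i - j) * ((i.choose j : ℕ) : Polynomial F)) := by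
      rw [hΦ, comp_eq_sum_left, Polynomial.sum_def, finset_sum_coeff]
      apply Finset.sum_congr rfl
      intro i _
      rw [Polynomial.coeff_C_mul, Polynomial.coeff_X_add_C_pow, hΘ, Polynomial.coeff_map]
    have hsupp : Θ.support = P.support := by
      rw [hΘ]
      exact Polynomial.support_map_of_injective _ C_injective
    have hLHS : (Φ.coeff j).coeff (d - j) = P.coeff d * ((d.choose j : ℕ) : F) := by
      rw [hΦsum, finset_sum_coeff]
      rw [hsupp]
      rw [Finset.sum_eq_single_of_mem d hdsupp]
      · rw [← Polynomial.C_eq_natCast, Polynomial.coeff_C_mul, Polynomial.coeff_mul_C,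
          Polynomial.coeff_X_pow, if_pos rfl, one_mul]
      · intro i _ hne
        rw [← Polynomial.C_eq_natCast, Polynomial.coeff_C_mul, Polynomial.coeff_mul_C,
          Polynomial.coeff_X_pow, if_neg (by omega), zero_mul, mul_zero]
    rw [hLHS] at h1
    have hcast : ((d.choose j : ℕ) : F) ≠ 0 := by
      rw [Ne, CharP.cast_eq_zero_iff F p]
      apply lucas_nondvd hd1
      rwa [Nat.sub_add_cancel he1, ← hqpe]
    exact (mul_eq_zero.mp h1).resolve_right hcast
  -- assemble r
  have hqdiv : q / p = p ^ (e - 1) := by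
    rw [hqpe]
    conv_lhs => rw [show e = (e - 1) + 1 by omega, pow_succ]
    exact Nat.mul_div_cancel _ (by omega)
  refine ⟨e, X ^ q - P - C (P.eval (-t)), hqpe, he1, ?_, ?_⟩
  · rw [natDegree_le_iff_coeff_eq_zero]
    intro N hN
    rw [hqdiv] at hN
    rcases lt_trichotomy N q with h | h | h
    · rw [Polynomial.coeff_sub, Polynomial.coeff_sub, Polynomial.coeff_X_pow,
        if_neg (by omega), Polynomial.coeff_C, if_neg (by omega),
        hcoeffzero N hN h]
      ring
    · subst h
      rw [Polynomial.coeff_sub, Polynomial.coeff_sub, Polynomial.coeff_X_pow,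
        if_pos rfl, Polynomial.coeff_C, if_neg (by omega), ← hPdeg,
        hPmonic.coeff_natDegree]
      ring
    · rw [Polynomial.coeff_sub, Polynomial.coeff_sub, Polynomial.coeff_X_pow,
        if_neg (by omega), Polynomial.coeff_C, if_neg (by omega),
        Polynomial.coeff_eq_zero_of_natDegree_lt (by rw [hPdeg]; omega)]
      ring
  · intro a ha
    rw [hAB, Finset.mem_image] at ha
    obtain ⟨b, hb, rfl⟩ := ha
    have h1 := congrArg (Polynomial.eval (t + b)) (hadd (-t))
    rw [eval_comp, eval_add, eval_X, eval_C, eval_add, Polynomial.eval_C] at h1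
    have h2 : t + b + -t = b := by ring
    rw [h2, hProot b hb] at h1
    rw [Polynomial.eval_sub, Polynomial.eval_sub, Polynomial.eval_pow, eval_X,
      Polynomial.eval_C]
    linear_combination h1

open MvPolynomial

lemma grid_lemma {F : Type*} [Field F] :
    ∀ (n : ℕ) (A : Fin n → Finset F) (_ : ∀ i, (A i).Nonempty)
      (g : MvPolynomial (Fin n) F), g ≠ 0 → (∀ i, g.degreeOf i < (A i).card) →
      ∃ a : Fin n → F, (∀ i, a i ∈ A i) ∧ MvPolynomial.eval a g ≠ 0 := by
  intro n
  induction n with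
  | zero =>
    intro A hA g hg _
    refine ⟨fun i => i.elim0, fun i => i.elim0, ?_⟩
    rw [eq_C_of_isEmpty g, MvPolynomial.eval_C]
    intro h
    exact hg (by rw [eq_C_of_isEmpty g, h, map_zero])
  | succ n ih =>
    intro A hA g hg hdeg
    set φ := finSuccEquiv F n g with hφ
    have hφ0 : φ ≠ 0 := by
      simp only [hφ, ne_eq, EmbeddingLike.map_eq_zero_iff]; exact hg
    have hlead : φ.coeff φ.natDegree ≠ 0 := Polynomial.leadingCoeff_ne_zero.mpr hφ0
    obtain ⟨a', ha'mem, ha'⟩ := ih (fun j => A j.succ) (fun j => hA _)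
      (φ.coeff φ.natDegree) hlead (fun j => lt_of_le_of_lt
        (degreeOf_coeff_finSuccEquiv g j φ.natDegree) (hdeg j.succ))
    set ψ := Polynomial.map (MvPolynomial.eval a') φ with hψ
    have hψ0 : ψ ≠ 0 := fun h => ha' (by
      have := Polynomial.coeff_map (MvPolynomial.eval a') φ.natDegree (p := φ)
      rw [← hψ, h] at this
      simpa using this.symm)
    have hψdeg : ψ.natDegree < (A 0).card := by
      calc ψ.natDegree ≤ φ.natDegree := Polynomial.natDegree_map_le
        _ = degreeOf 0 g := natDegree_finSuccEquiv g
        _ < (A 0).card := hdeg 0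
    have : ∃ x ∈ A 0, ψ.eval x ≠ 0 := by
      by_contra h
      push_neg at h
      exact hψ0 (Polynomial.eq_zero_of_natDegree_lt_card_of_eval_eq_zero' ψ (A 0) h hψdeg)
    obtain ⟨x, hx, hxe⟩ := this
    refine ⟨Fin.cons x a', ?_, ?_⟩
    · intro i
      refine Fin.cases ?_ ?_ i
      · simpa using hx
      · intro j; simpa using ha'mem j
    · rw [eval_eq_eval_mv_eval']
      exact hxe

lemma reduce_step {F : Type*} [Field F] {n : ℕ} (p : ℕ) (hp2 : 2 ≤ p) (i : Fin n)
    (A : Finset F) (q : ℕ) (hq : q = A.card) (hq2 : 2 ≤ q)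
    (r : Polynomial F) (hrdeg : r.natDegree ≤ q / p)
    (hrval : ∀ a ∈ A, r.eval a = a ^ q)
    (κ : Fin n →₀ ℕ) (hκ : κ i < q) (Bf : ℕ)
    (hB : Bf < (κ.sum fun _ e => e) + (q - q / p)) :
    ∀ g : MvPolynomial (Fin n) F, g.totalDegree ≤ Bf →
      ∃ g', g'.totalDegree ≤ Bf ∧ g'.degreeOf i < q ∧
        (∀ j, j ≠ i → g'.degreeOf j ≤ g.degreeOf j) ∧
        g'.coeff κ = g.coeff κ ∧
        (∀ a : Fin n → F, a i ∈ A → MvPolynomial.eval a g' = MvPolynomial.eval a g) := by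
  classical
  have hqp_lt : q / p < q := Nat.div_lt_self (by omega) (by omega)
  -- the substitute polynomial for X i ^ q
  set Rd : MvPolynomial (Fin n) F :=
    r.sum fun j a => monomial (Finsupp.single i j) a with hRd
  have hRdsupp : ∀ m ∈ Rd.support, ∃ jj ∈ r.support, m = Finsupp.single i jj := by
    intro m hm
    rw [hRd, Polynomial.sum_def] at hm
    obtain ⟨jj, hjj, hmem⟩ := Finset.mem_biUnion.mp (MvPolynomial.support_sum hm)
    refine ⟨jj, hjj, ?_⟩
    have : m ∈ if r.coeff jj = 0 then (∅ : Finset (Fin n →₀ ℕ)) else {Finsupp.single i jj} := by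
      rwa [MvPolynomial.support_monomial] at hmem
    split at this
    · simp at this
    · simpa using this
  have hRdtd : Rd.totalDegree ≤ q / p := by
    rw [MvPolynomial.totalDegree]
    apply Finset.sup_le
    intro m hm
    obtain ⟨jj, hjj, rfl⟩ := hRdsupp m hm
    rw [Finsupp.sum_single_index (by rfl)]
    exact le_trans (Polynomial.le_natDegree_of_mem_supp jj hjj) hrdeg
  have hRddeg : ∀ j, j ≠ i → Rd.degreeOf j = 0 := by
    intro j hj
    rw [← Nat.le_zero, MvPolynomial.degreeOf_le_iff]
    intro m hm
    obtain ⟨jj, hjj, rfl⟩ := hRdsupp m hm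
    rw [Finsupp.single_apply, if_neg (fun h => hj h.symm)]
  have hRdeval : ∀ a : Fin n → F, MvPolynomial.eval a Rd = r.eval (a i) := by
    intro a
    rw [hRd, Polynomial.sum_def, map_sum, Polynomial.eval_eq_sum, Polynomial.sum_def]
    apply Finset.sum_congr rfl
    intro jj _
    rw [MvPolynomial.eval_monomial, Finsupp.prod_single_index (by rw [pow_zero])]
  -- main induction
  suffices H : ∀ N (g : MvPolynomial (Fin n) F), g.degreeOf i ≤ N → g.totalDegree ≤ Bf →
      ∃ g', g'.totalDegree ≤ Bf ∧ g'.degreeOf i < q ∧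
        (∀ j, j ≠ i → g'.degreeOf j ≤ g.degreeOf j) ∧
        g'.coeff κ = g.coeff κ ∧
        (∀ a : Fin n → F, a i ∈ A → MvPolynomial.eval a g' = MvPolynomial.eval a g) by
    intro g hg
    exact H (g.degreeOf i) g le_rfl hg
  intro N
  induction N using Nat.strong_induction_on with
  | _ N ih =>
    intro g hgN hgtd
    by_cases hlt : g.degreeOf i < q
    · exact ⟨g, hgtd, hlt, fun j _ => le_rfl, rfl, fun a _ => rfl⟩
    push_neg at hlt
    set d := g.degreeOf i with hd
    have hdB : d ≤ Bf := le_trans (MvPolynomial.degreeOf_le_totalDegree g i) hgtd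
    set s := g.support.filter (fun m => m i = d) with hs
    have hsmem : ∀ m ∈ s, m ∈ g.support ∧ m i = d := fun m hm => Finset.mem_filter.mp hm
    set t := ∑ m ∈ s, monomial m (MvPolynomial.coeff m g) with ht
    set h := ∑ m ∈ s, monomial (m - Finsupp.single i q) (MvPolynomial.coeff m g) with hh
    have hsub : ∀ m ∈ s, Finsupp.single i q ≤ m := by
      intro m hm
      rw [Finsupp.single_le_iff]
      have := (hsmem m hm).2
      omega
    have hhXq : h * (X i : MvPolynomial (Fin n) F) ^ q = t := by
      rw [hh, ht, Finset.sum_mul]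
      refine Finset.sum_congr rfl fun m hm => ?_
      rw [MvPolynomial.X_pow_eq_monomial, MvPolynomial.monomial_mul, mul_one, tsub_add_cancel_of_le (hsub m hm)]
    have hcoefft : ∀ m, MvPolynomial.coeff m t = if m ∈ s then MvPolynomial.coeff m g else 0 := by
      intro m
      rw [ht, MvPolynomial.coeff_sum]
      simp only [MvPolynomial.coeff_monomial]
      rw [Finset.sum_ite_eq' s m (fun m' => MvPolynomial.coeff m' g)]
    set l := g - t with hl
    have hcoeffl : ∀ m, MvPolynomial.coeff m l =
        if m ∈ s then 0 else MvPolynomial.coeff m g := by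
      intro m
      rw [hl, MvPolynomial.coeff_sub, hcoefft]
      split <;> simp
    have hsuppl : l.support ⊆ g.support := by
      intro m hm
      rw [MvPolynomial.mem_support_iff] at hm ⊢
      intro h0
      apply hm
      rw [hcoeffl]
      split
      · rfl
      · exact h0
    have hltop : ∀ m ∈ l.support, m i < d := by
      intro m hm
      have h1 : m i ≤ d := by
        rw [hd]
        exact MvPolynomial.monomial_le_degreeOf i (hsuppl hm)
      rcases lt_or_eq_of_le h1 with h2 | h2
      · exact h2
      · exfalso
        have hms : m ∈ s := Finset.mem_filter.mpr ⟨hsuppl hm, h2⟩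
        rw [MvPolynomial.mem_support_iff, hcoeffl, if_pos hms] at hm
        exact hm rfl
    have hsupph : ∀ m' ∈ h.support, ∃ m ∈ s, m' = m - Finsupp.single i q := by
      intro m' hm'
      rw [hh] at hm'
      obtain ⟨m, hm, hmem⟩ := Finset.mem_biUnion.mp (MvPolynomial.support_sum hm')
      refine ⟨m, hm, ?_⟩
      have : m' ∈ if MvPolynomial.coeff m g = 0 then (∅ : Finset (Fin n →₀ ℕ))
          else {m - Finsupp.single i q} := by
        rwa [MvPolynomial.support_monomial] at hmem
      split at this
      · simp at this
      · simpa using this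
    have hmsum : ∀ m ∈ s, ((m - Finsupp.single i q).sum fun _ e => e) + q
        = m.sum fun _ e => e := by
      intro m hm
      rw [Finsupp.sum_fintype _ _ (fun _ => rfl), Finsupp.sum_fintype _ _ (fun _ => rfl)]
      rw [← Finset.sum_erase_add Finset.univ _ (Finset.mem_univ i),
        ← Finset.sum_erase_add Finset.univ (fun j => m j) (Finset.mem_univ i)]
      have hoff : ∀ j ∈ Finset.univ.erase i, (m - Finsupp.single i q) j = m j := by
        intro j hj
        rw [Finsupp.tsub_apply, Finsupp.single_apply,
          if_neg ((Finset.mem_erase.mp hj).1.symm), tsub_zero]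
      rw [Finset.sum_congr rfl hoff, Finsupp.tsub_apply, Finsupp.single_apply, if_pos rfl]
      have h1 : m i = d := (hsmem m hm).2
      have h2 : q ≤ m i := by omega
      have hww : ∑ x ∈ Finset.univ.erase i, m x = (Finset.univ.erase i).sum ⇑m := rfl
      omega
    have hmsB : ∀ m ∈ s, (m.sum fun _ e => e) ≤ Bf := by
      intro m hm
      exact le_trans (MvPolynomial.le_totalDegree (hsmem m hm).1) hgtd
    have hhtd : h.totalDegree + q ≤ Bf := by
      have h1 : h.totalDegree ≤ Bf - q := by
        rw [MvPolynomial.totalDegree]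
        apply Finset.sup_le
        intro m' hm'
        obtain ⟨m, hm, rfl⟩ := hsupph m' hm'
        have := hmsum m hm
        have := hmsB m hm
        omega
      omega
    set W := h * Rd with hW
    have hWtd : W.totalDegree + (q - q / p) ≤ Bf := by
      have h1 : W.totalDegree ≤ h.totalDegree + Rd.totalDegree := totalDegree_mul h Rd
      have h2 := hRdtd
      omega
    set g' := l + W with hg'
    have hgeq : g' = g - h * ((X i : MvPolynomial (Fin n) F) ^ q - Rd) := by
      rw [hg', hl, hW, mul_sub, hhXq]
      ring
    have htd' : g'.totalDegree ≤ Bf := by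
      refine le_trans (totalDegree_add l W) (max_le ?_ ?_)
      · refine le_trans ?_ hgtd
        rw [MvPolynomial.totalDegree, MvPolynomial.totalDegree]
        exact Finset.sup_mono hsuppl
      · omega
    have hdegl : l.degreeOf i ≤ d - 1 := by
      rw [MvPolynomial.degreeOf_le_iff]
      intro m hm
      have := hltop m hm
      omega
    have hdegh : h.degreeOf i ≤ d - q := by
      rw [MvPolynomial.degreeOf_le_iff]
      intro m' hm'
      obtain ⟨m, hm, rfl⟩ := hsupph m' hm'
      rw [Finsupp.tsub_apply, Finsupp.single_apply, if_pos rfl]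
      have := (hsmem m hm).2
      omega
    have hdegW : W.degreeOf i ≤ d - 1 := by
      refine le_trans (MvPolynomial.degreeOf_mul_le i h Rd) ?_
      have h1 : Rd.degreeOf i ≤ q / p := le_trans (MvPolynomial.degreeOf_le_totalDegree _ _) hRdtd
      omega
    have hdeg' : g'.degreeOf i ≤ d - 1 := by
      refine le_trans (MvPolynomial.degreeOf_add_le i l W) (max_le hdegl hdegW)
    have hdegj' : ∀ j, j ≠ i → g'.degreeOf j ≤ g.degreeOf j := by
      intro j hj
      refine le_trans (MvPolynomial.degreeOf_add_le j l W) (max_le ?_ ?_)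
      · rw [MvPolynomial.degreeOf_eq_sup, MvPolynomial.degreeOf_eq_sup]
        exact Finset.sup_mono hsuppl
      · refine le_trans (MvPolynomial.degreeOf_mul_le j h Rd) ?_
        rw [hRddeg j hj, add_zero]
        rw [MvPolynomial.degreeOf_le_iff]
        intro m' hm'
        obtain ⟨m, hm, rfl⟩ := hsupph m' hm'
        rw [Finsupp.tsub_apply, Finsupp.single_apply, if_neg (fun hh => hj hh.symm), tsub_zero]
        exact MvPolynomial.monomial_le_degreeOf j (hsmem m hm).1
    have hcoeff' : g'.coeff κ = g.coeff κ := by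
      rw [hg', MvPolynomial.coeff_add]
      have h1 : MvPolynomial.coeff κ l = MvPolynomial.coeff κ g := by
        rw [hcoeffl, if_neg]
        intro hκs
        have := (hsmem κ hκs).2
        omega
      have h2 : MvPolynomial.coeff κ W = 0 := by
        by_contra h0
        have hκsupp : κ ∈ W.support := MvPolynomial.mem_support_iff.mpr h0
        have := MvPolynomial.le_totalDegree hκsupp
        omega
      rw [h1, h2, add_zero]
    have heval' : ∀ a : Fin n → F, a i ∈ A →
        MvPolynomial.eval a g' = MvPolynomial.eval a g := by
      intro a ha
      rw [hgeq, map_sub, map_mul, map_sub, map_pow, MvPolynomial.eval_X, hRdeval,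
        hrval (a i) ha, hq]
      ring
    have hrec : g'.degreeOf i ≤ d - 1 := hdeg'
    obtain ⟨g'', htd'', hdeg'', hdegj'', hcoeff'', heval''⟩ :=
      ih (d - 1) (by omega) g' hrec htd'
    refine ⟨g'', htd'', hdeg'', ?_, ?_, ?_⟩
    · intro j hj
      exact le_trans (hdegj'' j hj) (hdegj' j hj)
    · rw [hcoeff'', hcoeff']
    · intro a ha
      rw [heval'' a ha, heval' a ha]


/-- The Combinatorial Nullstellensatz over additive grids, where the degree bound
involves `(1 - p⁻¹)·min |Aᵢ| - 1 = m - m/p - 1` for `m = min |Aᵢ|` (a power of `p`). -/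
theorem combinatorial_nullstellensatz_additive {F : Type*} [Field F]
    (p : ℕ) [hp : Fact p.Prime] [CharP F p]
    (n : ℕ) (hn : 0 < n) (A : Fin n → Finset F)
    (hA : ∀ i, ∃ H : AddSubgroup F, ∃ t : F,
      ((A i : Set F) = (fun x => t + x) '' (H : Set F)))
    (hcard : ∀ i, 1 < (A i).card)
    (f : MvPolynomial (Fin n) F) (k : Fin n → ℕ)
    (hk : ∀ i, k i < (A i).card)
    (hcoeff : MvPolynomial.coeff (Finsupp.equivFunOnFinite.symm k) f ≠ 0)
    (hdeg : f.totalDegree ≤ (∑ i, k i) +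
      ((Finset.univ.inf' ⟨⟨0, hn⟩, Finset.mem_univ _⟩ fun i => (A i).card) - (Finset.univ.inf' ⟨⟨0, hn⟩, Finset.mem_univ _⟩ fun i => (A i).card) / p) - 1) :
    ∃ a : Fin n → F, (∀ i, a i ∈ A i) ∧ MvPolynomial.eval a f ≠ 0 := by
  classical
  have hp2 : 2 ≤ p := (Fact.out : p.Prime).two_le
  set κ : Fin n →₀ ℕ := Finsupp.equivFunOnFinite.symm k with hκdef
  have hκapp : ∀ i, κ i = k i := fun i => rfl
  have hκsum : (κ.sum fun _ e => e) = ∑ i, k i := by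
    rw [Finsupp.sum_fintype _ _ (fun _ => rfl)]
    exact Finset.sum_congr rfl fun i _ => hκapp i
  -- one-variable data
  have hone : ∀ i, ∃ (e : ℕ) (r : Polynomial F), (A i).card = p ^ e ∧ 1 ≤ e ∧
      r.natDegree ≤ (A i).card / p ∧ ∀ a ∈ A i, r.eval a = a ^ (A i).card :=
    fun i => one_var p (A i) (hA i) (hcard i)
  choose e r he he1 hrdeg hrval using hone
  -- the minimum
  set m : ℕ := Finset.univ.inf' ⟨⟨0, hn⟩, Finset.mem_univ _⟩ fun i => (A i).card with hm
  obtain ⟨i₀, _, hi₀⟩ := Finset.exists_mem_eq_inf' ⟨⟨0, hn⟩, Finset.mem_univ _⟩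
    (fun i => (A i).card)
  have hmle : ∀ i, m ≤ (A i).card := fun i => Finset.inf'_le _ (Finset.mem_univ i)
  -- key monotonicity of a ↦ p^a - p^(a-1)
  have hdivpow : ∀ c, 1 ≤ c → p ^ c / p = p ^ (c - 1) := by
    intro c hc
    conv_lhs => rw [show c = (c - 1) + 1 by omega, pow_succ]
    exact Nat.mul_div_cancel _ (by omega)
  have key : ∀ a b : ℕ, 1 ≤ a → a ≤ b → p ^ a - p ^ a / p ≤ p ^ b - p ^ b / p := by
    intro a b ha hab
    rw [hdivpow a ha, hdivpow b (by omega)]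
    obtain ⟨pm, hpm⟩ : ∃ pm, p = pm + 1 := ⟨p - 1, by omega⟩
    subst hpm
    have h1 : (pm + 1) ^ (a - 1) ≤ (pm + 1) ^ (b - 1) :=
      Nat.pow_le_pow_right (by omega) (by omega)
    have h3 : pm * (pm + 1) ^ (a - 1) ≤ pm * (pm + 1) ^ (b - 1) := Nat.mul_le_mul_left pm h1
    have hxa : (pm + 1) ^ a = pm * (pm + 1) ^ (a - 1) + (pm + 1) ^ (a - 1) := by
      conv_lhs => rw [show a = (a - 1) + 1 by omega, pow_succ]
      ring
    have hxb : (pm + 1) ^ b = pm * (pm + 1) ^ (b - 1) + (pm + 1) ^ (b - 1) := by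
      conv_lhs => rw [show b = (b - 1) + 1 by omega, pow_succ]
      ring
    omega
  have hmm : 1 ≤ m - m / p := by
    rw [hm, hi₀, he i₀, hdivpow _ (he1 i₀)]
    have : p ^ (e i₀ - 1) < p ^ (e i₀) := Nat.pow_lt_pow_right (by omega) (by have := he1 i₀; omega)
    omega
  have hBi : ∀ i, f.totalDegree < (κ.sum fun _ e => e) +
      ((A i).card - (A i).card / p) := by
    intro i
    have h1 : m - m / p ≤ (A i).card - (A i).card / p := by
      rw [hm, hi₀, he i₀, he i]
      apply key
      · exact he1 i₀
      · have := hmle i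
        rw [hm, hi₀, he i₀, he i] at this
        exact (Nat.pow_le_pow_iff_right (by omega)).mp this
    rw [hκsum]
    have h2 : f.totalDegree ≤ (∑ i, k i) + (m - m / p) - 1 := hdeg
    omega
  -- iterate reduction over all variables
  have outer : ∀ s : Finset (Fin n), ∃ g : MvPolynomial (Fin n) F,
      g.totalDegree ≤ f.totalDegree ∧ (∀ i ∈ s, g.degreeOf i < (A i).card) ∧
      g.coeff κ = f.coeff κ ∧
      (∀ a : Fin n → F, (∀ i, a i ∈ A i) → MvPolynomial.eval a g = MvPolynomial.eval a f) := by
    intro s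
    induction s using Finset.induction_on with
    | empty => exact ⟨f, le_rfl, by simp, rfl, fun _ _ => rfl⟩
    | insert i s0 hnotmem IH =>
      obtain ⟨g, h1, h2, h3, h4⟩ := IH
      obtain ⟨g', hg1, hg2, hg3, hg4, hg5⟩ :=
        reduce_step p hp2 i (A i) (A i).card rfl (hcard i) (r i) (hrdeg i) (hrval i)
          κ (by rw [hκapp]; exact hk i) f.totalDegree (hBi i) g h1
      refine ⟨g', hg1, ?_, hg4.trans h3, ?_⟩
      · intro j hj
        rcases Finset.mem_insert.mp hj with rfl | hj0
        · exact hg2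
        · have hji : j ≠ i := fun hji => hnotmem (hji ▸ hj0)
          exact lt_of_le_of_lt (hg3 j hji) (h2 j hj0)
      · intro a ha
        rw [hg5 a (ha i), h4 a ha]
  obtain ⟨g, hg1, hg2, hg3, hg4⟩ := outer Finset.univ
  have hgne : g ≠ 0 := by
    intro h0
    rw [h0] at hg3
    exact hcoeff (by rw [← hg3]; simp)
  obtain ⟨a, ha1, ha2⟩ := grid_lemma n A
    (fun i => Finset.card_pos.mp (by have := hcard i; omega)) g hgne
    (fun i => hg2 i (Finset.mem_univ i))
  exact ⟨a, ha1, fun h0 => ha2 (by rw [hg4 a ha1, h0])⟩
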